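/- arXiv:1109.1385 — 2 statements merged into one kernel-verified Lean document; each statement's English description precedes it below -/
import Mathlib

section
/- (Multiplicativity of c_n) For all positive integers m and n with gcd(m,n) = 1 one has c_{mn} = c_m · c_n. -/
open Complex Real MeasureTheory Asymptotics Filter Finset

open ArithmeticFunction in
noncomputable def Fsq' (κ : ℕ) : ArithmeticFunction ℝ :=
  ⟨fun k => if IsSquare k ∧ k ≠ 0 then ((Nat.sqrt k : ℝ)) ^ (2 * (κ - 1)) else 0, by simp⟩

open ArithmeticFunction in
noncomputable def Ga' (a : ℕ → ℂ) : ArithmeticFunction ℝ :=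
  ⟨fun k => if k = 0 then 0 else (‖a k‖) ^ 2, by simp⟩

lemma isSquare_mul_iff' {m n : ℕ} (h : m.Coprime n) :
    IsSquare (m * n) ↔ IsSquare m ∧ IsSquare n := by
  constructor
  · rintro ⟨r, hr⟩
    have hu : IsUnit (gcd m n) := by
      rw [Nat.isUnit_iff]
      exact h
    obtain ⟨d, hd⟩ := exists_associated_pow_of_mul_eq_pow hu
      (show m * n = r ^ 2 by rw [sq]; exact hr)
    have hu' : IsUnit (gcd n m) := by
      rw [Nat.isUnit_iff]
      exact h.symm
    obtain ⟨e, he⟩ := exists_associated_pow_of_mul_eq_pow hu'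
      (show n * m = r ^ 2 by rw [sq, mul_comm]; exact hr)
    rw [associated_iff_eq] at hd he
    exact ⟨⟨d, by rw [← hd, sq]⟩, ⟨e, by rw [← he, sq]⟩⟩
  · rintro ⟨⟨u, hu⟩, ⟨v, hv⟩⟩
    exact ⟨u * v, by rw [hu, hv]; ring⟩

lemma Fsq'_mult (κ : ℕ) : (Fsq' κ).IsMultiplicative := by
  constructor
  · show (if IsSquare 1 ∧ (1:ℕ) ≠ 0 then ((Nat.sqrt 1 : ℝ)) ^ (2 * (κ - 1)) else 0) = 1
    simp
  · intro p q h
    show (if IsSquare (p*q) ∧ p*q ≠ 0 then ((Nat.sqrt (p*q) : ℝ)) ^ (2*(κ-1)) else 0)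
      = (if IsSquare p ∧ p ≠ 0 then ((Nat.sqrt p : ℝ)) ^ (2*(κ-1)) else 0) *
        (if IsSquare q ∧ q ≠ 0 then ((Nat.sqrt q : ℝ)) ^ (2*(κ-1)) else 0)
    rcases eq_or_ne p 0 with rfl | hp
    · simp
    rcases eq_or_ne q 0 with rfl | hq
    · simp
    by_cases hsq : IsSquare (p * q)
    · obtain ⟨⟨u, hu⟩, ⟨v, hv⟩⟩ := (isSquare_mul_iff' h).mp hsq
      rw [if_pos ⟨hsq, mul_ne_zero hp hq⟩, if_pos ⟨⟨u, hu⟩, hp⟩, if_pos ⟨⟨v, hv⟩, hq⟩,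
        hu, hv, show u * u * (v * v) = (u * v) * (u * v) by ring,
        Nat.sqrt_eq, Nat.sqrt_eq, Nat.sqrt_eq]
      push_cast
      rw [mul_pow]
    · rw [if_neg (show ¬(IsSquare (p*q) ∧ p*q ≠ 0) from fun hh => hsq hh.1)]
      by_cases hsp : IsSquare p
      · have hnq : ¬ IsSquare q := fun hq' => hsq ((isSquare_mul_iff' h).mpr ⟨hsp, hq'⟩)
        rw [if_neg (show ¬(IsSquare q ∧ q ≠ 0) from fun hh => hnq hh.1), mul_zero]
      · rw [if_neg (show ¬(IsSquare p ∧ p ≠ 0) from fun hh => hsp hh.1), zero_mul]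

lemma Ga'_mult (a : ℕ → ℂ) (ha1 : a 1 = 1)
    (hmult : ∀ m n : ℕ, Nat.Coprime m n → a (m * n) = a m * a n) :
    (Ga' a).IsMultiplicative := by
  constructor
  · show (if (1:ℕ) = 0 then 0 else (‖a 1‖) ^ 2) = 1
    simp [ha1]
  · intro p q h
    show (if p * q = 0 then 0 else (‖a (p*q)‖) ^ 2)
      = (if p = 0 then 0 else (‖a p‖) ^ 2) *
        (if q = 0 then 0 else (‖a q‖) ^ 2)
    rcases eq_or_ne p 0 with rfl | hp
    · have : q = 1 := Nat.coprime_zero_left q |>.mp h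
      simp [this]
    rcases eq_or_ne q 0 with rfl | hq
    · have : p = 1 := Nat.coprime_zero_right p |>.mp h
      simp [this]
    rw [if_neg (mul_ne_zero hp hq), if_neg hp, if_neg hq, hmult p q h, norm_mul, mul_pow]

lemma sum_eq_conv (κ : ℕ) (a : ℕ → ℂ) (n : ℕ) (hn : 1 ≤ n) :
    ∑ m ∈ n.divisors.filter (fun m => m ^ 2 ∣ n),
      (m : ℝ) ^ (2 * (κ - 1)) * ‖a (n / m ^ 2)‖ ^ 2
    = (Fsq' κ * Ga' a) n := by
  rw [ArithmeticFunction.mul_apply]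
  have hn0 : n ≠ 0 := by omega
  have hside : ∀ x ∈ n.divisorsAntidiagonal,
      (Fsq' κ) x.1 * (Ga' a) x.2 ≠ 0 → IsSquare x.1 := by
    intro x hx h
    by_contra hns
    apply h
    show (if IsSquare x.1 ∧ x.1 ≠ 0 then ((Nat.sqrt x.1 : ℝ)) ^ (2*(κ-1)) else 0) * _ = 0
    rw [if_neg (fun hh => hns hh.1), zero_mul]
  rw [← Finset.sum_filter_of_ne hside]
  refine (Finset.sum_nbij' (fun x : ℕ × ℕ => Nat.sqrt x.1) (fun d => (d ^ 2, n / d ^ 2))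
    ?_ ?_ ?_ ?_ ?_).symm
  · intro x hx
    simp only [Finset.mem_filter, Nat.mem_divisorsAntidiagonal] at hx
    obtain ⟨⟨hxy, _⟩, d, hd⟩ := hx
    have hx1 : x.1 = Nat.sqrt x.1 ^ 2 := by rw [hd, Nat.sqrt_eq, sq]
    have hd1 : x.1 ∣ n := ⟨x.2, hxy.symm⟩
    simp only [Finset.mem_filter, Nat.mem_divisors]
    refine ⟨⟨dvd_trans ?_ hd1, hn0⟩, by rw [← hx1]; exact hd1⟩
    conv_rhs => rw [hx1]
    exact dvd_pow_self _ two_ne_zero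
  · intro d hd
    simp only [Finset.mem_filter, Nat.mem_divisors] at hd
    simp only [Finset.mem_filter, Nat.mem_divisorsAntidiagonal]
    exact ⟨⟨Nat.mul_div_cancel' hd.2, hn0⟩, ⟨d, sq d⟩⟩
  · intro x hx
    simp only [Finset.mem_filter, Nat.mem_divisorsAntidiagonal] at hx
    obtain ⟨⟨hxy, _⟩, d, hd⟩ := hx
    have hx1 : Nat.sqrt x.1 ^ 2 = x.1 := by rw [hd, Nat.sqrt_eq, sq]
    have hx10 : x.1 ≠ 0 := by
      intro h0
      rw [h0, zero_mul] at hxy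
      exact hn0 hxy.symm
    refine Prod.ext hx1 ?_
    show n / Nat.sqrt x.1 ^ 2 = x.2
    rw [hx1, ← hxy, Nat.mul_div_cancel_left _ (Nat.pos_of_ne_zero hx10)]
  · intro d hd
    simp only
    rw [sq, Nat.sqrt_eq]
  · intro x hx
    simp only [Finset.mem_filter, Nat.mem_divisorsAntidiagonal] at hx
    obtain ⟨⟨hxy, _⟩, d, hd⟩ := hx
    have hx1 : Nat.sqrt x.1 ^ 2 = x.1 := by rw [hd, Nat.sqrt_eq, sq]
    have hx10 : x.1 ≠ 0 := by
      intro h0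
      rw [h0, zero_mul] at hxy
      exact hn0 hxy.symm
    have hx20 : x.2 ≠ 0 := by
      intro h0
      rw [h0, mul_zero] at hxy
      exact hn0 hxy.symm
    show (if IsSquare x.1 ∧ x.1 ≠ 0 then ((Nat.sqrt x.1 : ℝ)) ^ (2*(κ-1)) else 0) *
        (if x.2 = 0 then 0 else (‖a x.2‖) ^ 2)
      = (Nat.sqrt x.1 : ℝ) ^ (2 * (κ - 1)) * ‖a (n / Nat.sqrt x.1 ^ 2)‖ ^ 2
    rw [if_pos ⟨⟨d, hd⟩, hx10⟩, if_neg hx20, hx1, ← hxy,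
      Nat.mul_div_cancel_left _ (Nat.pos_of_ne_zero hx10)]

theorem stmt_12
    (κ : ℕ) (hκeven : Even κ) (hκ12 : 12 ≤ κ)
    (f : CuspForm (Matrix.SpecialLinearGroup.mapGL ℝ : Matrix.SpecialLinearGroup (Fin 2) ℤ →* GL (Fin 2) ℝ).range (κ : ℤ)) (hf : f ≠ 0)
    (a : ℕ → ℂ)
    (hfour : ∀ z : UpperHalfPlane, f z =
      ∑' n : ℕ, a (n + 1) * Complex.exp (2 * Real.pi * Complex.I * ((n : ℂ) + 1) * (z : ℂ)))
    (ha1 : a 1 = 1)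
    (hmult : ∀ m n : ℕ, Nat.Coprime m n → a (m * n) = a m * a n)
    (hhecke : ∀ p : ℕ, p.Prime → ∀ j : ℕ, 1 ≤ j →
      a (p ^ (j + 1)) = a p * a (p ^ j) - (p : ℂ) ^ (κ - 1) * a (p ^ (j - 1)))
    (c : ℕ → ℝ)
    (hc : ∀ n : ℕ, 1 ≤ n → c n = (n : ℝ) ^ ((1 : ℤ) - (κ : ℤ)) *
      ∑ m ∈ n.divisors.filter (fun m => m ^ 2 ∣ n),
        (m : ℝ) ^ (2 * (κ - 1)) * ‖a (n / m ^ 2)‖ ^ 2)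
    (m n : ℕ) (hm : 1 ≤ m) (hn : 1 ≤ n) (hmn : Nat.Coprime m n) :
    c (m * n) = c m * c n := by
  have hmn1 : 1 ≤ m * n := Nat.one_le_iff_ne_zero.mpr (Nat.mul_ne_zero (by omega) (by omega))
  rw [hc _ hmn1, hc _ hm, hc _ hn, sum_eq_conv κ a _ hmn1, sum_eq_conv κ a _ hm,
    sum_eq_conv κ a _ hn, ((Fsq'_mult κ).mul (Ga'_mult a ha1 hmult)).map_mul_of_coprime hmn]
  push_cast
  rw [mul_zpow]
  ring
end

section
/- (Asymptotics for Σ|a(n)|²) There exists a constant D > 0 such that Σ_{n≤x} |a(n)|² = D·x^κ + O(x^{κ−2/5}) as x → ∞. -/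
open Complex Real MeasureTheory Asymptotics Filter Finset

namespace Stmt13Aux

open ArithmeticFunction

lemma pow_sub_pow_le {a b : ℝ} (hb : 0 ≤ b) (hab : b ≤ a) (n : ℕ) :
    a ^ n - b ^ n ≤ n * a ^ (n - 1) * (a - b) := by
  have ha : 0 ≤ a := hb.trans hab
  rw [← geom_sum₂_mul a b n]
  have h1 : (∑ i ∈ range n, a ^ i * b ^ (n - 1 - i)) ≤ n * a ^ (n - 1) := by
    calc (∑ i ∈ range n, a ^ i * b ^ (n - 1 - i))
        ≤ ∑ i ∈ range n, a ^ (n - 1) := by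
          refine Finset.sum_le_sum fun i hi => ?_
          have hi' : i ≤ n - 1 := Nat.le_sub_one_of_lt (mem_range.mp hi)
          calc a ^ i * b ^ (n - 1 - i) ≤ a ^ i * a ^ (n - 1 - i) := by
                exact mul_le_mul_of_nonneg_left (pow_le_pow_left₀ hb hab _) (pow_nonneg ha _)
            _ = a ^ (n - 1) := by rw [← pow_add]; congr 1; omega
      _ = n * a ^ (n - 1) := by rw [Finset.sum_const, card_range, nsmul_eq_mul]
  exact mul_le_mul_of_nonneg_right h1 (by linarith)

lemma le_pow_sub_pow {a b : ℝ} (hb : 0 ≤ b) (hab : b ≤ a) (n : ℕ) :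
    (n : ℝ) * b ^ (n - 1) * (a - b) ≤ a ^ n - b ^ n := by
  have ha : 0 ≤ a := hb.trans hab
  rw [← geom_sum₂_mul a b n]
  have h1 : (n : ℝ) * b ^ (n - 1) ≤ ∑ i ∈ range n, a ^ i * b ^ (n - 1 - i) := by
    calc (n : ℝ) * b ^ (n - 1) = ∑ i ∈ range n, b ^ (n - 1) := by
          rw [Finset.sum_const, card_range, nsmul_eq_mul]
      _ ≤ ∑ i ∈ range n, a ^ i * b ^ (n - 1 - i) := by
          refine Finset.sum_le_sum fun i hi => ?_
          have hi' : i ≤ n - 1 := Nat.le_sub_one_of_lt (mem_range.mp hi)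
          calc b ^ (n - 1) = b ^ i * b ^ (n - 1 - i) := by rw [← pow_add]; congr 1; omega
            _ ≤ a ^ i * b ^ (n - 1 - i) := by
                exact mul_le_mul_of_nonneg_right (pow_le_pow_left₀ hb hab _) (pow_nonneg hb _)
  exact mul_le_mul_of_nonneg_right h1 (by linarith)

/-- Abel summation identity, proved by induction. -/
lemma abel_identity (C : ℝ) (S g : ℕ → ℝ) (hS0 : S 0 = 0) (M : ℕ) :
    ∑ k ∈ Icc 1 M, g k * (S k - S (k - 1))
      = C * ∑ k ∈ Icc 1 M, g k + g M * (S M - C * M)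
        - ∑ k ∈ range M, (g (k + 1) - g k) * (S k - C * k) := by
  induction M with
  | zero => simp [hS0]
  | succ M ih =>
    rw [Finset.sum_Icc_succ_top (by omega), Finset.sum_Icc_succ_top (by omega),
      Finset.sum_range_succ, ih]
    simp only [Nat.add_sub_cancel]
    push_cast
    ring

/-- Hyperbola-method swap of summation. -/
lemma swap_sum (F : ℕ → ℕ → ℝ) (M : ℕ) :
    ∑ k ∈ Icc 1 M, ∑ m ∈ k.divisors.filter (fun m => m ^ 2 ∣ k), F m (k / m ^ 2)
      = ∑ m ∈ Icc 1 (Nat.sqrt M), ∑ j ∈ Icc 1 (M / m ^ 2), F m j := by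
  rw [Finset.sum_sigma', Finset.sum_sigma']
  refine Finset.sum_nbij' (fun p => ⟨p.2, p.1 / p.2 ^ 2⟩) (fun p => ⟨p.1 ^ 2 * p.2, p.1⟩)
    ?_ ?_ ?_ ?_ ?_
  · rintro ⟨k, m⟩ hkm
    simp only [Finset.mem_sigma, Finset.mem_Icc, Finset.mem_filter, Nat.mem_divisors] at hkm ⊢
    obtain ⟨⟨hk1, hkM⟩, ⟨hmk, hk0⟩, hm2k⟩ := hkm
    have hm0 : 0 < m := Nat.pos_of_dvd_of_pos hmk (by omega)
    have hm2le : m ^ 2 ≤ k := Nat.le_of_dvd (by omega) hm2k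
    refine ⟨⟨hm0, Nat.le_sqrt.mpr ?_⟩, ?_, Nat.div_le_div_right hkM⟩
    · calc m * m = m ^ 2 := (sq m).symm
        _ ≤ M := hm2le.trans hkM
    · have := Nat.div_le_div_right (c := m ^ 2) hm2le
      rwa [Nat.div_self (by positivity)] at this
  · rintro ⟨m, j⟩ hmj
    simp only [Finset.mem_sigma, Finset.mem_Icc, Finset.mem_filter, Nat.mem_divisors] at hmj ⊢
    obtain ⟨⟨hm1, hmM⟩, hj1, hjM⟩ := hmj
    have h1 : m ^ 2 * j ≤ M := by
      calc m ^ 2 * j ≤ m ^ 2 * (M / m ^ 2) := Nat.mul_le_mul_left _ hjM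
        _ ≤ M := Nat.mul_div_le M (m ^ 2)
    refine ⟨⟨Nat.mul_pos (by positivity) (by omega), h1⟩, ⟨⟨m * j, by ring⟩, by positivity⟩,
      ⟨j, rfl⟩⟩
  · rintro ⟨k, m⟩ hkm
    simp only [Finset.mem_sigma, Finset.mem_Icc, Finset.mem_filter, Nat.mem_divisors] at hkm
    obtain ⟨⟨hk1, hkM⟩, ⟨hmk, hk0⟩, hm2k⟩ := hkm
    simp only [Sigma.mk.inj_iff, heq_eq_eq]
    exact ⟨Nat.mul_div_cancel' hm2k, trivial⟩
  · rintro ⟨m, j⟩ hmj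
    simp only [Finset.mem_sigma, Finset.mem_Icc] at hmj
    obtain ⟨⟨hm1, hmM⟩, hj1, hjM⟩ := hmj
    simp only [Sigma.mk.inj_iff, heq_eq_eq]
    exact ⟨trivial, Nat.mul_div_cancel_left _ (by positivity)⟩
  · rintro ⟨k, m⟩ _; rfl

lemma sum_divisors_moebius (n : ℕ) :
    (∑ d ∈ n.divisors, ArithmeticFunction.moebius d) = if n = 1 then 1 else 0 := by
  rw [← ArithmeticFunction.coe_mul_zeta_apply, ArithmeticFunction.moebius_mul_coe_zeta,
    ArithmeticFunction.one_apply]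

lemma swap_sum2 (G : ℕ → ℕ → ℝ) (N : ℕ) :
    ∑ d ∈ Icc 1 (Nat.sqrt N), ∑ m ∈ Icc 1 (Nat.sqrt (N / d ^ 2)), G d m
      = ∑ r ∈ Icc 1 (Nat.sqrt N), ∑ d ∈ r.divisors, G d (r / d) := by
  rw [Finset.sum_sigma', Finset.sum_sigma']
  refine Finset.sum_nbij' (fun p => ⟨p.1 * p.2, p.1⟩) (fun p => ⟨p.2, p.1 / p.2⟩)
    ?_ ?_ ?_ ?_ ?_
  · rintro ⟨d, m⟩ hdm
    simp only [Finset.mem_sigma, Finset.mem_Icc, Nat.mem_divisors] at hdm ⊢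
    obtain ⟨⟨hd1, hdN⟩, hm1, hmN⟩ := hdm
    have hd2 : 0 < d ^ 2 := by positivity
    have hm2 : m * m ≤ N / d ^ 2 := Nat.le_sqrt.mp hmN
    have h1 : d * m * (d * m) ≤ N := by
      have := (Nat.le_div_iff_mul_le hd2).mp hm2
      calc d * m * (d * m) = m * m * d ^ 2 := by ring
        _ ≤ N := this
    exact ⟨⟨Nat.mul_pos hd1 hm1, Nat.le_sqrt.mpr h1⟩, ⟨m, rfl⟩, by positivity⟩
  · rintro ⟨r, d⟩ hrd
    simp only [Finset.mem_sigma, Finset.mem_Icc, Nat.mem_divisors] at hrd ⊢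
    obtain ⟨⟨hr1, hrN⟩, hdr, hr0⟩ := hrd
    have hd1 : 0 < d := Nat.pos_of_dvd_of_pos hdr (by omega)
    have hdN : d ≤ Nat.sqrt N := le_trans (Nat.le_of_dvd (by omega) hdr) hrN
    have hrd1 : 1 ≤ r / d := (Nat.one_le_div_iff hd1).mpr (Nat.le_of_dvd (by omega) hdr)
    refine ⟨⟨hd1, hdN⟩, hrd1, Nat.le_sqrt.mpr ?_⟩
    rw [Nat.le_div_iff_mul_le (by positivity)]
    have hrr : r * r ≤ N := Nat.le_sqrt.mp hrN
    calc r / d * (r / d) * d ^ 2 = (r / d * d) * (r / d * d) := by ring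
      _ = r * r := by rw [Nat.div_mul_cancel hdr]
      _ ≤ N := hrr
  · rintro ⟨d, m⟩ hdm
    simp only [Finset.mem_sigma, Finset.mem_Icc] at hdm
    simp only [Sigma.mk.inj_iff, heq_eq_eq]
    exact ⟨trivial, by rw [Nat.mul_div_cancel_left _ (by omega)]⟩
  · rintro ⟨r, d⟩ hrd
    simp only [Finset.mem_sigma, Finset.mem_Icc, Nat.mem_divisors] at hrd
    obtain ⟨⟨hr1, hrN⟩, hdr, hr0⟩ := hrd
    simp only [Sigma.mk.inj_iff, heq_eq_eq]
    exact ⟨Nat.mul_div_cancel' hdr, trivial⟩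
  · rintro ⟨d, m⟩ hdm
    simp only [Finset.mem_sigma, Finset.mem_Icc] at hdm
    simp only
    rw [Nat.mul_div_cancel_left _ (by omega)]

lemma partial_tail_le (R : ℕ) (n : ℕ) :
    ∑ d ∈ range n, (1:ℝ) / ((d : ℝ) + R + 1) ^ 2 ≤ 1 / ((R:ℝ) + 1) ^ 2 + 1 / ((R:ℝ) + 1) := by
  have key : ∀ m : ℕ, ∑ d ∈ range (m + 1), (1:ℝ) / ((d : ℝ) + R + 1) ^ 2
      ≤ 1 / ((R:ℝ) + 1) ^ 2 + 1 / ((R:ℝ) + 1) - 1 / ((m : ℝ) + R + 1) := by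
    intro m
    induction m with
    | zero => simp
    | succ m ih =>
      rw [Finset.sum_range_succ]
      have h1 : (0:ℝ) < (m : ℝ) + R + 1 := by positivity
      have h2 : (0:ℝ) < (m : ℝ) + R + 2 := by positivity
      have h3 : (1:ℝ) / (((m+1 : ℕ) : ℝ) + R + 1) ^ 2
          ≤ 1 / ((m : ℝ) + R + 1) - 1 / ((m : ℝ) + R + 2) := by
        push_cast
        rw [div_sub_div _ _ (ne_of_gt h1) (ne_of_gt h2)]
        rw [div_le_div_iff₀ (by positivity) (by positivity)]
        ring_nf
        nlinarith
      push_cast at ih h3 ⊢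
      have e : ((m:ℝ) + 1 + (R:ℝ) + 1) = (m:ℝ) + (R:ℝ) + 2 := by ring
      rw [e] at h3 ⊢
      linarith
  cases n with
  | zero => positivity
  | succ m =>
    have := key m
    have h1 : (0:ℝ) < (m : ℝ) + R + 1 := by positivity
    have h2 : (0:ℝ) ≤ 1 / ((m : ℝ) + R + 1) := by positivity
    linarith

lemma summable_shift_sq (R : ℕ) : Summable (fun d : ℕ => (1:ℝ) / ((d : ℝ) + R + 1) ^ 2) := by
  have h : Summable (fun n : ℕ => (1:ℝ) / (n : ℝ) ^ 2) :=
    Real.summable_one_div_nat_pow.mpr (by norm_num)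
  have h2 := (summable_nat_add_iff (R + 1)).mpr h
  refine h2.congr fun d => ?_
  push_cast
  ring_nf

lemma tsum_tail_le (R : ℕ) :
    ∑' d : ℕ, (1:ℝ) / ((d : ℝ) + R + 1) ^ 2 ≤ 1 / ((R:ℝ) + 1) ^ 2 + 1 / ((R:ℝ) + 1) := by
  refine Summable.tsum_le_of_sum_le (summable_shift_sq R) fun s => ?_
  obtain ⟨n, hn⟩ := s.exists_nat_subset_range
  calc ∑ d ∈ s, (1:ℝ) / ((d : ℝ) + R + 1) ^ 2
      ≤ ∑ d ∈ range n, (1:ℝ) / ((d : ℝ) + R + 1) ^ 2 :=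
        Finset.sum_le_sum_of_subset_of_nonneg hn (fun i _ _ => by positivity)
    _ ≤ _ := partial_tail_le R n

lemma summable_moebius_div_sq : Summable (fun d : ℕ => ((moebius d : ℤ) : ℝ) / (d : ℝ) ^ 2) := by
  refine Summable.of_norm_bounded (g := fun d : ℕ => (1:ℝ) / (d : ℝ) ^ 2)
    (Real.summable_one_div_nat_pow.mpr (by norm_num)) fun d => ?_
  rcases Nat.eq_zero_or_pos d with h | h
  · subst h; simp
  · rw [Real.norm_eq_abs, abs_div, _root_.abs_of_nonneg (by positivity : (0:ℝ) ≤ (d:ℝ)^2)]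
    show |((moebius d : ℤ) : ℝ)| / (d:ℝ)^2 ≤ 1 / (d:ℝ)^2
    gcongr
    have h1 : |(moebius d : ℤ)| ≤ 1 := abs_moebius_le_one
    exact_mod_cast h1

noncomputable def fmu : ℕ → ℝ := fun d => ((moebius d : ℤ) : ℝ) / (d : ℝ) ^ 2

lemma fmu_zero : fmu 0 = 0 := by simp [fmu]

lemma fmu_one : fmu 1 = 1 := by simp [fmu]

lemma abs_fmu_le (d : ℕ) : |fmu d| ≤ 1 / (d : ℝ) ^ 2 := by
  rcases Nat.eq_zero_or_pos d with h | h
  · subst h; simp [fmu]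
  · rw [fmu, abs_div, _root_.abs_of_nonneg (by positivity : (0:ℝ) ≤ (d:ℝ)^2)]
    gcongr
    have h1 : |(moebius d : ℤ)| ≤ 1 := abs_moebius_le_one
    exact_mod_cast h1

lemma moebius_partial (R : ℕ) :
    |(∑' d : ℕ, fmu d) - ∑ d ∈ Finset.Icc 1 R, fmu d|
      ≤ 1 / ((R:ℝ) + 1) ^ 2 + 1 / ((R:ℝ) + 1) := by
  have hsum : Summable fmu := summable_moebius_div_sq
  have h1 : ∑ d ∈ Finset.range (R + 1), fmu d = ∑ d ∈ Finset.Icc 1 R, fmu d := by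
    rw [Finset.range_eq_Ico, Finset.sum_eq_sum_Ico_succ_bot (by omega), fmu_zero,
      Finset.Ico_add_one_right_eq_Icc, zero_add]
  have h2 := Summable.sum_add_tsum_nat_add (f := fmu) (R + 1) hsum
  have h3 : (∑' d : ℕ, fmu d) - ∑ d ∈ Finset.Icc 1 R, fmu d = ∑' d : ℕ, fmu (d + (R + 1)) := by
    rw [← h1]; linarith
  rw [h3]
  have hs2 : Summable (fun d : ℕ => fmu (d + (R + 1))) := (summable_nat_add_iff (R + 1)).mpr hsum
  calc |∑' d : ℕ, fmu (d + (R + 1))| ≤ ∑' d : ℕ, |fmu (d + (R + 1))| := by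
        simpa [Real.norm_eq_abs] using norm_tsum_le_tsum_norm (f := fun d : ℕ => fmu (d + (R + 1)))
          (by simpa [Real.norm_eq_abs] using hs2.abs)
    _ ≤ ∑' d : ℕ, (1:ℝ) / ((d : ℝ) + R + 1) ^ 2 := by
        refine Summable.tsum_le_tsum (fun d => ?_) hs2.abs (summable_shift_sq R)
        have := abs_fmu_le (d + (R + 1))
        refine this.trans_eq ?_
        push_cast
        ring
    _ ≤ _ := tsum_tail_le R

lemma L_pos : (1:ℝ)/4 ≤ ∑' d : ℕ, fmu d := by
  have h := moebius_partial 1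
  have h1 : ∑ d ∈ Finset.Icc 1 1, fmu d = 1 := by simp [fmu_one]
  rw [h1] at h
  have := abs_le.mp h
  norm_num at this ⊢
  linarith [this.1]

end Stmt13Aux

set_option maxHeartbeats 2000000 in
theorem stmt_13
    (κ : ℕ) (hκeven : Even κ) (hκ12 : 12 ≤ κ)
    (f : CuspForm ((⊤ : Subgroup (Matrix.SpecialLinearGroup (Fin 2) ℤ)) : Subgroup (GL (Fin 2) ℝ)) (κ : ℤ)) (hf : f ≠ 0)
    (a : ℕ → ℂ)
    (hfour : ∀ z : UpperHalfPlane, f z =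
      ∑' n : ℕ, a (n + 1) * Complex.exp (2 * Real.pi * Complex.I * ((n : ℂ) + 1) * (z : ℂ)))
    (ha1 : a 1 = 1)
    (hmult : ∀ m n : ℕ, Nat.Coprime m n → a (m * n) = a m * a n)
    (hhecke : ∀ p : ℕ, p.Prime → ∀ j : ℕ, 1 ≤ j →
      a (p ^ (j + 1)) = a p * a (p ^ j) - (p : ℂ) ^ (κ - 1) * a (p ^ (j - 1)))
    (c : ℕ → ℝ)
    (hc : ∀ n : ℕ, 1 ≤ n → c n = (n : ℝ) ^ ((1 : ℤ) - (κ : ℤ)) *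
      ∑ m ∈ n.divisors.filter (fun m => m ^ 2 ∣ n),
        (m : ℝ) ^ (2 * (κ - 1)) * ‖a (n / m ^ 2)‖ ^ 2)
    (C : ℝ) (hC : 0 < C)
    (Δ : ℝ → ℝ) (hΔ : ∀ x : ℝ, Δ x = (∑ n ∈ Finset.Icc 1 ⌊x⌋₊, c n) - C * x)
    (hRS : Δ =O[atTop] fun x : ℝ => x ^ ((3 : ℝ) / 5)) :
    ∃ D : ℝ, 0 < D ∧
      (fun x : ℝ => (∑ n ∈ Finset.Icc 1 ⌊x⌋₊, ‖a n‖ ^ 2) - D * x ^ (κ : ℝ))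
        =O[atTop] fun x : ℝ => x ^ ((κ : ℝ) - 2 / 5) := by
  classical
  open Stmt13Aux in
  -- notation
  set b : ℕ → ℝ := fun n => ‖a n‖ ^ 2 with hbdef
  set S : ℕ → ℝ := fun N => ∑ k ∈ Finset.Icc 1 N, c k with hSdef
  set Bf : ℕ → ℝ := fun N => ∑ n ∈ Finset.Icc 1 N, b n with hBdef
  set g : ℕ → ℝ := fun k => (k : ℝ) ^ (κ - 1) with hgdef
  set T : ℕ → ℝ := fun M => ∑ k ∈ Finset.Icc 1 M, g k * c k with hTdef
  set P : ℕ → ℝ := fun M => ∑ k ∈ Finset.Icc 1 M, g k with hPdef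
  set L : ℝ := ∑' d : ℕ, Stmt13Aux.fmu d with hLdef
  have hκ1 : 1 ≤ κ := by omega
  have hbnn : ∀ n, 0 ≤ b n := fun n => by positivity
  -- Step A: unfold hc
  have keyA : ∀ k : ℕ, 1 ≤ k → g k * c k
      = ∑ m ∈ k.divisors.filter (fun m => m ^ 2 ∣ k), (m:ℝ) ^ (2*(κ-1)) * b (k / m ^ 2) := by
    intro k hk
    have hk0 : ((k:ℝ)) ≠ 0 := by
      have : (0:ℝ) < (k:ℝ) := by exact_mod_cast Nat.pos_of_ne_zero (by omega)
      exact ne_of_gt this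
    simp only [hgdef]
    rw [hc k hk, ← mul_assoc]
    have h1 : (k:ℝ) ^ (κ - 1) * (k:ℝ) ^ ((1:ℤ) - (κ:ℤ)) = 1 := by
      rw [← zpow_natCast (k:ℝ) (κ-1), ← zpow_add₀ hk0]
      have h2 : ((κ - 1 : ℕ) : ℤ) + ((1:ℤ) - (κ:ℤ)) = 0 := by
        have : ((κ - 1 : ℕ) : ℤ) = (κ:ℤ) - 1 := by
          push_cast [Nat.cast_sub hκ1]; ring
        rw [this]; ring
      rw [h2, zpow_zero]
    rw [h1, one_mul]
  -- Step B: hyperbola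
  have hTB : ∀ M : ℕ, T M = ∑ m ∈ Finset.Icc 1 (Nat.sqrt M),
      (m:ℝ) ^ (2*(κ-1)) * Bf (M / m ^ 2) := by
    intro M
    have h1 : T M = ∑ k ∈ Finset.Icc 1 M,
        ∑ m ∈ k.divisors.filter (fun m => m ^ 2 ∣ k), ((m:ℝ) ^ (2*(κ-1)) * b (k / m ^ 2)) := by
      rw [hTdef]
      exact Finset.sum_congr rfl fun k hk => keyA k (Finset.mem_Icc.mp hk).1
    rw [h1, Stmt13Aux.swap_sum (fun m j => (m:ℝ) ^ (2*(κ-1)) * b j) M]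
    exact Finset.sum_congr rfl fun m _ => by rw [hBdef, ← Finset.mul_sum]
  -- Step C: Moebius inversion
  have hBC : ∀ N : ℕ, 1 ≤ N → Bf N = ∑ d ∈ Finset.Icc 1 (Nat.sqrt N),
      ((ArithmeticFunction.moebius d : ℤ):ℝ) * (d:ℝ) ^ (2*(κ-1)) * T (N / d ^ 2) := by
    intro N hN
    symm
    calc ∑ d ∈ Finset.Icc 1 (Nat.sqrt N),
          ((ArithmeticFunction.moebius d : ℤ):ℝ) * (d:ℝ) ^ (2*(κ-1)) * T (N / d ^ 2)
        = ∑ d ∈ Finset.Icc 1 (Nat.sqrt N), ∑ m ∈ Finset.Icc 1 (Nat.sqrt (N / d ^ 2)),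
            ((ArithmeticFunction.moebius d : ℤ):ℝ) * ((d:ℝ) ^ (2*(κ-1)) *
              ((m:ℝ) ^ (2*(κ-1)) * Bf (N / d ^ 2 / m ^ 2))) := by
          refine Finset.sum_congr rfl fun d _ => ?_
          rw [hTB (N / d ^ 2), Finset.mul_sum]
          exact Finset.sum_congr rfl fun m _ => by ring
      _ = ∑ r ∈ Finset.Icc 1 (Nat.sqrt N), ∑ d ∈ r.divisors,
            ((ArithmeticFunction.moebius d : ℤ):ℝ) * ((d:ℝ) ^ (2*(κ-1)) *
              (((r / d : ℕ):ℝ) ^ (2*(κ-1)) * Bf (N / d ^ 2 / (r / d) ^ 2))) :=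
          Stmt13Aux.swap_sum2 (fun d m => ((ArithmeticFunction.moebius d : ℤ):ℝ) *
            ((d:ℝ) ^ (2*(κ-1)) * ((m:ℝ) ^ (2*(κ-1)) * Bf (N / d ^ 2 / m ^ 2)))) N
      _ = ∑ r ∈ Finset.Icc 1 (Nat.sqrt N), ∑ d ∈ r.divisors,
            ((ArithmeticFunction.moebius d : ℤ):ℝ) * ((r:ℝ) ^ (2*(κ-1)) * Bf (N / r ^ 2)) := by
          refine Finset.sum_congr rfl fun r hr => Finset.sum_congr rfl fun d hd => ?_
          obtain ⟨hdr, hr0⟩ := Nat.mem_divisors.mp hd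
          have h1 : (d:ℝ) ^ (2*(κ-1)) * ((r / d : ℕ):ℝ) ^ (2*(κ-1)) = (r:ℝ) ^ (2*(κ-1)) := by
            rw [← mul_pow, ← Nat.cast_mul, Nat.mul_div_cancel' hdr]
          have h2 : N / d ^ 2 / (r / d) ^ 2 = N / r ^ 2 := by
            rw [Nat.div_div_eq_div_mul]
            congr 1
            rw [← mul_pow, Nat.mul_div_cancel' hdr]
          rw [← h1, h2]; ring
      _ = ∑ r ∈ Finset.Icc 1 (Nat.sqrt N),
            (if r = 1 then ((r:ℝ) ^ (2*(κ-1)) * Bf (N / r ^ 2)) else 0) := by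
          refine Finset.sum_congr rfl fun r hr => ?_
          rw [← Finset.sum_mul]
          have hcast : (∑ d ∈ r.divisors, ((ArithmeticFunction.moebius d : ℤ):ℝ))
              = (((∑ d ∈ r.divisors, ArithmeticFunction.moebius d) : ℤ) : ℝ) := by
            push_cast; rfl
          rw [hcast, Stmt13Aux.sum_divisors_moebius r]
          split_ifs with h <;> simp
      _ = Bf N := by
          rw [Finset.sum_ite_eq' (Finset.Icc 1 (Nat.sqrt N)) 1
            (fun r => (r:ℝ) ^ (2*(κ-1)) * Bf (N / r ^ 2))]
          have h1 : (1:ℕ) ∈ Finset.Icc 1 (Nat.sqrt N) := by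
            simp [Nat.le_sqrt.mpr (by omega : 1 * 1 ≤ N)]
          rw [if_pos h1]
          norm_num
  -- Abel summation setup
  have hS0 : S 0 = 0 := by simp [hSdef]
  have hck : ∀ k : ℕ, 1 ≤ k → c k = S k - S (k - 1) := by
    intro k hk
    obtain ⟨j, rfl⟩ := Nat.exists_eq_succ_of_ne_zero (by omega : k ≠ 0)
    have h1 : S (j + 1) = S j + c (j + 1) := by
      simp only [hSdef]
      exact Finset.sum_Icc_succ_top (by omega) c
    have h2 : j + 1 - 1 = j := by omega
    rw [h2, h1]; ring
  have hTS : ∀ M : ℕ, T M = C * P M + g M * (S M - C * M)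
      - ∑ k ∈ Finset.range M, (g (k + 1) - g k) * (S k - C * k) := by
    intro M
    have h1 : T M = ∑ k ∈ Finset.Icc 1 M, g k * (S k - S (k - 1)) := by
      rw [hTdef]
      exact Finset.sum_congr rfl fun k hk => by rw [hck k (Finset.mem_Icc.mp hk).1]
    rw [h1, Stmt13Aux.abel_identity C S g hS0 M, hPdef]
  -- uniform bound on Δ
  have hA : ∃ A : ℝ, 0 < A ∧ ∀ x : ℝ, 1 ≤ x → |Δ x| ≤ A * x ^ ((3:ℝ)/5) := by
    rw [isBigO_iff] at hRS
    obtain ⟨A₀, hA₀⟩ := hRS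
    rw [eventually_atTop] at hA₀
    obtain ⟨x₀, hx₀⟩ := hA₀
    set x₁ : ℝ := max x₀ 1 with hx₁
    have hx₁1 : (1:ℝ) ≤ x₁ := le_max_right _ _
    set M₀ : ℝ := (∑ n ∈ Finset.Icc 1 ⌊x₁⌋₊, |c n|) + C * x₁ with hM₀
    have hM₀pos : 0 < M₀ := by
      have h1 : (0:ℝ) ≤ ∑ n ∈ Finset.Icc 1 ⌊x₁⌋₊, |c n| :=
        Finset.sum_nonneg fun n _ => abs_nonneg _
      have h2 : 0 < C * x₁ := mul_pos hC (by linarith)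
      linarith
    refine ⟨|A₀| + M₀, by positivity, ?_⟩
    intro x hx
    have hxpos : (0:ℝ) < x := by linarith
    have hr : 0 ≤ x ^ ((3:ℝ)/5) := Real.rpow_nonneg (by linarith) _
    have h35 : 1 ≤ x ^ ((3:ℝ)/5) := by
      have := Real.rpow_le_rpow_of_exponent_le hx (by norm_num : (0:ℝ) ≤ 3/5)
      rwa [Real.rpow_zero] at this
    rcases le_or_gt x₁ x with h | h
    · have h1 := hx₀ x (le_trans (le_max_left _ _) h)
      rw [Real.norm_eq_abs, Real.norm_eq_abs,
        _root_.abs_of_nonneg hr] at h1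
      calc |Δ x| ≤ A₀ * x ^ ((3:ℝ)/5) := h1
        _ ≤ (|A₀| + M₀) * x ^ ((3:ℝ)/5) := by
            have : A₀ ≤ |A₀| + M₀ := by
              have := le_abs_self A₀; linarith
            exact mul_le_mul_of_nonneg_right this hr
    · have h1 : |Δ x| ≤ M₀ := by
        rw [hΔ x]
        have hfl : ⌊x⌋₊ ≤ ⌊x₁⌋₊ := Nat.floor_le_floor (le_of_lt h)
        calc |(∑ n ∈ Finset.Icc 1 ⌊x⌋₊, c n) - C * x|
            ≤ |∑ n ∈ Finset.Icc 1 ⌊x⌋₊, c n| + |C * x| := abs_sub _ _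
          _ ≤ (∑ n ∈ Finset.Icc 1 ⌊x₁⌋₊, |c n|) + C * x₁ := by
              have h2 : |∑ n ∈ Finset.Icc 1 ⌊x⌋₊, c n| ≤ ∑ n ∈ Finset.Icc 1 ⌊x⌋₊, |c n| :=
                Finset.abs_sum_le_sum_abs _ _
              have h3 : (∑ n ∈ Finset.Icc 1 ⌊x⌋₊, |c n|) ≤ ∑ n ∈ Finset.Icc 1 ⌊x₁⌋₊, |c n| :=
                Finset.sum_le_sum_of_subset_of_nonneg
                  (Finset.Icc_subset_Icc le_rfl hfl) (fun i _ _ => abs_nonneg _)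
              have h4 : |C * x| = C * x := _root_.abs_of_nonneg (by positivity)
              have h5 : C * x ≤ C * x₁ := mul_le_mul_of_nonneg_left (le_of_lt h) (le_of_lt hC)
              rw [h4]; linarith
          _ = M₀ := hM₀.symm
      calc |Δ x| ≤ M₀ := h1
        _ = M₀ * 1 := (mul_one _).symm
        _ ≤ (|A₀| + M₀) * x ^ ((3:ℝ)/5) := by
            refine mul_le_mul ?_ h35 (by norm_num) (by positivity)
            have := abs_nonneg A₀; linarith
  obtain ⟨A, hApos, hAb⟩ := hA
  have hΔnat : ∀ k : ℕ, |S k - C * (k:ℝ)| ≤ A * (k:ℝ) ^ ((3:ℝ)/5) := by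
    intro k
    rcases Nat.eq_zero_or_pos k with rfl | hk
    · simp [hS0, Real.zero_rpow (by norm_num : ((3:ℝ)/5) ≠ 0)]
    · have h1 := hAb (k:ℝ) (by exact_mod_cast hk)
      rw [hΔ, Nat.floor_natCast] at h1
      simpa [hSdef] using h1
  -- bound |T M - C * P M|
  have hTbound : ∀ M : ℕ, |T M - C * P M| ≤ 2 * A * ((M:ℝ) ^ (κ-1) * (M:ℝ) ^ ((3:ℝ)/5)) := by
    intro M
    have e1 : T M - C * P M = g M * (S M - C * M)
        - ∑ k ∈ Finset.range M, (g (k + 1) - g k) * (S k - C * k) := by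
      rw [hTS M]; ring
    rw [e1]
    have h1 : |g M * (S M - C * M)| ≤ (M:ℝ) ^ (κ-1) * (A * (M:ℝ) ^ ((3:ℝ)/5)) := by
      rw [abs_mul]
      have hgM : |g M| = (M:ℝ) ^ (κ-1) := by
        simp only [hgdef]; exact _root_.abs_of_nonneg (by positivity)
      rw [hgM]
      exact mul_le_mul_of_nonneg_left (hΔnat M) (by positivity)
    have h2 : |∑ k ∈ Finset.range M, (g (k + 1) - g k) * (S k - C * k)|
        ≤ (A * (M:ℝ) ^ ((3:ℝ)/5)) * (M:ℝ) ^ (κ-1) := by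
      calc |∑ k ∈ Finset.range M, (g (k + 1) - g k) * (S k - C * k)|
          ≤ ∑ k ∈ Finset.range M, |(g (k + 1) - g k) * (S k - C * k)| :=
            Finset.abs_sum_le_sum_abs _ _
        _ ≤ ∑ k ∈ Finset.range M, (g (k + 1) - g k) * (A * (M:ℝ) ^ ((3:ℝ)/5)) := by
            refine Finset.sum_le_sum fun k hk => ?_
            rw [abs_mul]
            have hmono : g k ≤ g (k + 1) := by
              simp only [hgdef]
              exact pow_le_pow_left₀ (by positivity) (by exact_mod_cast Nat.le_succ k) _
            rw [_root_.abs_of_nonneg (sub_nonneg.mpr hmono)]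
            refine mul_le_mul_of_nonneg_left ?_ (sub_nonneg.mpr hmono)
            calc |S k - C * k| ≤ A * (k:ℝ) ^ ((3:ℝ)/5) := hΔnat k
              _ ≤ A * (M:ℝ) ^ ((3:ℝ)/5) := by
                  refine mul_le_mul_of_nonneg_left ?_ hApos.le
                  exact Real.rpow_le_rpow (by positivity)
                    (by exact_mod_cast (le_of_lt (Finset.mem_range.mp hk))) (by norm_num)
        _ = (A * (M:ℝ) ^ ((3:ℝ)/5)) * (M:ℝ) ^ (κ-1) := by
            rw [← Finset.sum_mul, Finset.sum_range_sub g M]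
            have hg0 : g M - g 0 = (M:ℝ) ^ (κ-1) := by
              simp only [hgdef]
              norm_num [zero_pow (by omega : κ - 1 ≠ 0)]
            rw [hg0, mul_comm]
    calc |g M * (S M - C * M) - ∑ k ∈ Finset.range M, (g (k + 1) - g k) * (S k - C * k)|
        ≤ |g M * (S M - C * M)|
          + |∑ k ∈ Finset.range M, (g (k + 1) - g k) * (S k - C * k)| := abs_sub _ _
      _ ≤ (M:ℝ) ^ (κ-1) * (A * (M:ℝ) ^ ((3:ℝ)/5))
          + (A * (M:ℝ) ^ ((3:ℝ)/5)) * (M:ℝ) ^ (κ-1) := add_le_add h1 h2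
      _ = 2 * A * ((M:ℝ) ^ (κ-1) * (M:ℝ) ^ ((3:ℝ)/5)) := by ring
  -- comparison of P with M^κ/κ
  have hPr : ∀ M : ℕ, P M = ∑ k ∈ Finset.range M, g (k + 1) := by
    intro M
    induction M with
    | zero => simp [hPdef]
    | succ M ih =>
      have h1 : P (M + 1) = P M + g (M + 1) := by
        simp only [hPdef]
        exact Finset.sum_Icc_succ_top (by omega) g
      rw [h1, ih, Finset.sum_range_succ]
  have hPlow : ∀ M : ℕ, ((M:ℝ)) ^ κ ≤ (κ:ℝ) * P M := by
    intro M
    have h1 : ((M:ℝ)) ^ κ = ∑ k ∈ Finset.range M, ((((k+1):ℕ):ℝ) ^ κ - ((k:ℕ):ℝ) ^ κ) := by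
      rw [Finset.sum_range_sub (fun k => ((k:ℕ):ℝ) ^ κ) M]
      norm_num [zero_pow (by omega : κ ≠ 0)]
    have h2 : (κ:ℝ) * P M = ∑ k ∈ Finset.range M, (κ:ℝ) * g (k + 1) := by
      rw [hPr M, Finset.mul_sum]
    rw [h1, h2]
    refine Finset.sum_le_sum fun k _ => ?_
    have h3 := Stmt13Aux.pow_sub_pow_le (b := (k:ℝ)) (a := (k:ℝ) + 1)
      (by positivity) (by linarith) κ
    have h4 : (κ:ℝ) * g (k + 1) = (κ:ℝ) * ((k:ℝ) + 1) ^ (κ - 1) := by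
      simp only [hgdef]; push_cast; ring
    rw [h4]
    push_cast
    nlinarith [h3]
  have hPhigh : ∀ M : ℕ, (κ:ℝ) * P M ≤ (((M:ℝ)) + 1) ^ κ := by
    intro M
    have h1 := Finset.sum_range_sub (fun k => ((k:ℝ) + 1) ^ κ) M
    have h2 : (κ:ℝ) * P M = ∑ k ∈ Finset.range M, (κ:ℝ) * g (k + 1) := by
      rw [hPr M, Finset.mul_sum]
    rw [h2]
    have h3 : ∑ k ∈ Finset.range M, (κ:ℝ) * g (k + 1)
        ≤ ∑ k ∈ Finset.range M, (((((k+1):ℕ):ℝ) + 1) ^ κ - ((k:ℝ) + 1) ^ κ) := by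
      refine Finset.sum_le_sum fun k _ => ?_
      have h4 := Stmt13Aux.le_pow_sub_pow (b := (k:ℝ) + 1) (a := (k:ℝ) + 1 + 1)
        (by positivity) (by linarith) κ
      have h5 : (κ:ℝ) * g (k + 1) = (κ:ℝ) * ((k:ℝ) + 1) ^ (κ - 1) := by
        simp only [hgdef]; push_cast; ring
      rw [h5]
      push_cast
      nlinarith [h4]
    rw [h1] at h3
    push_cast at h3
    have h6 : ((0:ℝ) + 1) ^ κ = 1 := by norm_num
    calc ∑ k ∈ Finset.range M, (κ:ℝ) * g (k + 1)
        ≤ (((M:ℝ)) + 1) ^ κ - ((0:ℝ) + 1) ^ κ := h3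
      _ ≤ (((M:ℝ)) + 1) ^ κ := by rw [h6]; linarith
  have hκR : (0:ℝ) < (κ:ℝ) := by exact_mod_cast (by omega : 0 < κ)
  have hPbound : ∀ M : ℕ, 1 ≤ M →
      |C * P M - C / (κ:ℝ) * (M:ℝ) ^ κ| ≤ C * 2 ^ (κ-1) * (M:ℝ) ^ (κ-1) := by
    intro M hM
    have hM1 : (1:ℝ) ≤ (M:ℝ) := by exact_mod_cast hM
    have h1 : |(κ:ℝ) * P M - (M:ℝ) ^ κ| ≤ ((M:ℝ) + 1) ^ κ - (M:ℝ) ^ κ := by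
      rw [_root_.abs_of_nonneg (by linarith [hPlow M])]
      linarith [hPhigh M]
    have h2 : ((M:ℝ) + 1) ^ κ - (M:ℝ) ^ κ ≤ (κ:ℝ) * ((M:ℝ) + 1) ^ (κ-1) := by
      have h3 := Stmt13Aux.pow_sub_pow_le (b := (M:ℝ)) (a := (M:ℝ) + 1)
        (by positivity) (by linarith) κ
      nlinarith [h3]
    have h3 : ((M:ℝ) + 1) ^ (κ-1) ≤ (2 * (M:ℝ)) ^ (κ-1) :=
      pow_le_pow_left₀ (by positivity) (by linarith) _
    have h4 : C * P M - C / (κ:ℝ) * (M:ℝ) ^ κ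
        = C / (κ:ℝ) * ((κ:ℝ) * P M - (M:ℝ) ^ κ) := by
      field_simp
    rw [h4, abs_mul, _root_.abs_of_nonneg (by positivity : (0:ℝ) ≤ C / (κ:ℝ))]
    calc C / (κ:ℝ) * |(κ:ℝ) * P M - (M:ℝ) ^ κ|
        ≤ C / (κ:ℝ) * ((κ:ℝ) * (2 * (M:ℝ)) ^ (κ-1)) := by
          refine mul_le_mul_of_nonneg_left ?_ (by positivity)
          calc |(κ:ℝ) * P M - (M:ℝ) ^ κ| ≤ ((M:ℝ) + 1) ^ κ - (M:ℝ) ^ κ := h1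
            _ ≤ (κ:ℝ) * ((M:ℝ) + 1) ^ (κ-1) := h2
            _ ≤ (κ:ℝ) * (2 * (M:ℝ)) ^ (κ-1) := mul_le_mul_of_nonneg_left h3 (by positivity)
      _ = C * 2 ^ (κ-1) * (M:ℝ) ^ (κ-1) := by
          rw [mul_pow]
          field_simp
  have hM35 : ∀ M : ℕ, 1 ≤ M → (1:ℝ) ≤ (M:ℝ) ^ ((3:ℝ)/5) := by
    intro M hM
    have hM1 : (1:ℝ) ≤ (M:ℝ) := by exact_mod_cast hM
    have := Real.rpow_le_rpow_of_exponent_le hM1 (by norm_num : (0:ℝ) ≤ 3/5)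
    rwa [Real.rpow_zero] at this
  have he : ∀ M : ℕ, 1 ≤ M → |T M - C / (κ:ℝ) * (M:ℝ) ^ κ|
      ≤ (2 * A + C * 2 ^ (κ-1)) * ((M:ℝ) ^ (κ-1) * (M:ℝ) ^ ((3:ℝ)/5)) := by
    intro M hM
    have h1 := hTbound M
    have h2 := hPbound M hM
    have h3 : C * 2 ^ (κ-1) * (M:ℝ) ^ (κ-1)
        ≤ C * 2 ^ (κ-1) * ((M:ℝ) ^ (κ-1) * (M:ℝ) ^ ((3:ℝ)/5)) := by
      rw [← mul_assoc]
      exact le_mul_of_one_le_right (by positivity) (hM35 M hM)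
    calc |T M - C / (κ:ℝ) * (M:ℝ) ^ κ|
        ≤ |T M - C * P M| + |C * P M - C / (κ:ℝ) * (M:ℝ) ^ κ| := by
          have := abs_sub_le (T M) (C * P M) (C / (κ:ℝ) * (M:ℝ) ^ κ)
          linarith
      _ ≤ 2 * A * ((M:ℝ) ^ (κ-1) * (M:ℝ) ^ ((3:ℝ)/5))
          + C * 2 ^ (κ-1) * ((M:ℝ) ^ (κ-1) * (M:ℝ) ^ ((3:ℝ)/5)) := by
          linarith [h1, h2, h3]
      _ = (2 * A + C * 2 ^ (κ-1)) * ((M:ℝ) ^ (κ-1) * (M:ℝ) ^ ((3:ℝ)/5)) := by ring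
  -- constants
  have hsum6 : Summable (fun n : ℕ => (1:ℝ)/(n:ℝ)^((6:ℝ)/5)) :=
    Real.summable_one_div_nat_rpow.mpr (by norm_num)
  set K₆ : ℝ := ∑' n : ℕ, (1:ℝ)/(n:ℝ)^((6:ℝ)/5) with hK₆def
  have hK₆nn : 0 ≤ K₆ := tsum_nonneg (fun n => by positivity)
  have hK6 : ∀ R : ℕ, ∑ d ∈ Finset.Icc 1 R, (1:ℝ)/(d:ℝ)^((6:ℝ)/5) ≤ K₆ := by
    intro R
    exact Summable.sum_le_tsum _ (fun i _ => by positivity) hsum6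
  set A₃ : ℝ := 2*A + C*2^(κ-1) with hA₃def
  have hA₃nn : 0 ≤ A₃ := by positivity
  have hLq : (1:ℝ)/4 ≤ L := hLdef ▸ Stmt13Aux.L_pos
  set D : ℝ := C/(κ:ℝ) * L with hDdef
  have hDpos : 0 < D := mul_pos (by positivity) (lt_of_lt_of_le (by norm_num) hLq)
  -- the main discrete estimate
  have hmain : ∀ N : ℕ, 1 ≤ N → |Bf N - D * (N:ℝ)^κ|
      ≤ (A₃ * K₆ + C + 2*C/(κ:ℝ)) * ((N:ℝ)^(κ-1) * (N:ℝ)^((3:ℝ)/5)) := by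
    intro N hN
    set R : ℕ := Nat.sqrt N with hRdef
    have hR1 : 1 ≤ R := Nat.le_sqrt.mpr (by omega)
    have hN1R : (1:ℝ) ≤ (N:ℝ) := by exact_mod_cast hN
    have hNpos : (0:ℝ) < (N:ℝ) := by linarith
    -- identity splitting the error
    have hid : Bf N - D * (N:ℝ)^κ
        = (∑ d ∈ Finset.Icc 1 R, ((ArithmeticFunction.moebius d : ℤ):ℝ) *
            ((d:ℝ)^(2*(κ-1)) * (T (N/d^2) - C/(κ:ℝ) * ((N/d^2 : ℕ):ℝ)^κ)))
          + C/(κ:ℝ) * (∑ d ∈ Finset.Icc 1 R, ((ArithmeticFunction.moebius d : ℤ):ℝ) *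
            ((d:ℝ)^(2*(κ-1)) * ((N/d^2 : ℕ):ℝ)^κ - (N:ℝ)^κ/(d:ℝ)^2))
          + C/(κ:ℝ) * ((((∑ d ∈ Finset.Icc 1 R, Stmt13Aux.fmu d) - L) * (N:ℝ)^κ)) := by
      have hsum : ∀ d ∈ Finset.Icc 1 R,
          ((ArithmeticFunction.moebius d : ℤ):ℝ) * (d:ℝ)^(2*(κ-1)) * T (N/d^2)
          = ((ArithmeticFunction.moebius d : ℤ):ℝ) *
              ((d:ℝ)^(2*(κ-1)) * (T (N/d^2) - C/(κ:ℝ) * ((N/d^2 : ℕ):ℝ)^κ))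
            + C/(κ:ℝ) * (((ArithmeticFunction.moebius d : ℤ):ℝ) *
              ((d:ℝ)^(2*(κ-1)) * ((N/d^2 : ℕ):ℝ)^κ - (N:ℝ)^κ/(d:ℝ)^2))
            + Stmt13Aux.fmu d * (C/(κ:ℝ) * (N:ℝ)^κ) := by
        intro d hd
        have hd1 : 1 ≤ d := (Finset.mem_Icc.mp hd).1
        have hdne : ((d:ℝ)) ≠ 0 := by
          have : (0:ℝ) < (d:ℝ) := by exact_mod_cast Nat.pos_of_ne_zero (by omega)
          exact ne_of_gt this
        simp only [Stmt13Aux.fmu]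
        field_simp
        ring
      calc Bf N - D * (N:ℝ)^κ
          = (∑ d ∈ Finset.Icc 1 R, ((ArithmeticFunction.moebius d : ℤ):ℝ) *
              (d:ℝ)^(2*(κ-1)) * T (N/d^2)) - D * (N:ℝ)^κ := by rw [hBC N hN]
        _ = (∑ d ∈ Finset.Icc 1 R,
              (((ArithmeticFunction.moebius d : ℤ):ℝ) *
                ((d:ℝ)^(2*(κ-1)) * (T (N/d^2) - C/(κ:ℝ) * ((N/d^2 : ℕ):ℝ)^κ))
              + C/(κ:ℝ) * (((ArithmeticFunction.moebius d : ℤ):ℝ) *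
                ((d:ℝ)^(2*(κ-1)) * ((N/d^2 : ℕ):ℝ)^κ - (N:ℝ)^κ/(d:ℝ)^2))
              + Stmt13Aux.fmu d * (C/(κ:ℝ) * (N:ℝ)^κ))) - D * (N:ℝ)^κ := by
            rw [Finset.sum_congr rfl hsum]
        _ = _ := by
            rw [Finset.sum_add_distrib, Finset.sum_add_distrib, ← Finset.mul_sum,
              ← Finset.sum_mul, hDdef]
            ring
    -- bound E1
    have hE1 : |∑ d ∈ Finset.Icc 1 R, ((ArithmeticFunction.moebius d : ℤ):ℝ) *
          ((d:ℝ)^(2*(κ-1)) * (T (N/d^2) - C/(κ:ℝ) * ((N/d^2 : ℕ):ℝ)^κ))|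
        ≤ A₃ * K₆ * ((N:ℝ)^(κ-1) * (N:ℝ)^((3:ℝ)/5)) := by
      calc |∑ d ∈ Finset.Icc 1 R, ((ArithmeticFunction.moebius d : ℤ):ℝ) *
              ((d:ℝ)^(2*(κ-1)) * (T (N/d^2) - C/(κ:ℝ) * ((N/d^2 : ℕ):ℝ)^κ))|
          ≤ ∑ d ∈ Finset.Icc 1 R, |((ArithmeticFunction.moebius d : ℤ):ℝ) *
              ((d:ℝ)^(2*(κ-1)) * (T (N/d^2) - C/(κ:ℝ) * ((N/d^2 : ℕ):ℝ)^κ))| :=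
            Finset.abs_sum_le_sum_abs _ _
        _ ≤ ∑ d ∈ Finset.Icc 1 R,
              (A₃ * ((N:ℝ)^(κ-1) * (N:ℝ)^((3:ℝ)/5))) * ((1:ℝ)/(d:ℝ)^((6:ℝ)/5)) := by
            refine Finset.sum_le_sum fun d hd => ?_
            obtain ⟨hd1, hdR⟩ := Finset.mem_Icc.mp hd
            have hdpos : (0:ℝ) < (d:ℝ) := by exact_mod_cast Nat.pos_of_ne_zero (by omega)
            have hdd : d^2 ≤ N := by
              have h := Nat.le_sqrt.mp (hRdef ▸ hdR)
              rwa [← pow_two] at h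
            have hMd1 : 1 ≤ N / d^2 := (Nat.one_le_div_iff (by positivity)).mpr hdd
            have hfl : ((N/d^2 : ℕ):ℝ) ≤ (N:ℝ)/((d:ℝ)^2) := by
              have h := Nat.cast_div_le (α := ℝ) (m := N) (n := d^2)
              rwa [Nat.cast_pow] at h
            have hflnn : (0:ℝ) ≤ ((N/d^2 : ℕ):ℝ) := Nat.cast_nonneg _
            have he1 := he (N/d^2) hMd1
            have hp1 : ((N/d^2 : ℕ):ℝ)^(κ-1) ≤ ((N:ℝ)/((d:ℝ)^2))^(κ-1) :=
              pow_le_pow_left₀ hflnn hfl _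
            have hp2 : ((N/d^2 : ℕ):ℝ)^((3:ℝ)/5) ≤ ((N:ℝ)/((d:ℝ)^2))^((3:ℝ)/5) :=
              Real.rpow_le_rpow hflnn hfl (by norm_num)
            have hcollapse : (d:ℝ)^(2*(κ-1)) *
                (((N:ℝ)/((d:ℝ)^2))^(κ-1) * ((N:ℝ)/((d:ℝ)^2))^((3:ℝ)/5))
                = ((N:ℝ)^(κ-1) * (N:ℝ)^((3:ℝ)/5)) * ((1:ℝ)/(d:ℝ)^((6:ℝ)/5)) := by
              rw [div_pow, Real.div_rpow (le_of_lt hNpos) (by positivity)]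
              have hd2r : ((d:ℝ)^2)^((3:ℝ)/5) = (d:ℝ)^((6:ℝ)/5) := by
                rw [← Real.rpow_natCast ((d:ℝ)) 2, ← Real.rpow_mul (le_of_lt hdpos)]
                norm_num
              rw [pow_mul, hd2r]
              have h1 : ((d:ℝ)^2)^(κ-1) ≠ 0 := by positivity
              have h2 : (d:ℝ)^((6:ℝ)/5) ≠ 0 := by positivity
              field_simp
            have hμ : |((ArithmeticFunction.moebius d : ℤ):ℝ)| ≤ 1 := by
              have h1 : |(ArithmeticFunction.moebius d : ℤ)| ≤ 1 :=
                ArithmeticFunction.abs_moebius_le_one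
              exact_mod_cast h1
            calc |((ArithmeticFunction.moebius d : ℤ):ℝ) *
                  ((d:ℝ)^(2*(κ-1)) * (T (N/d^2) - C/(κ:ℝ) * ((N/d^2 : ℕ):ℝ)^κ))|
                = |((ArithmeticFunction.moebius d : ℤ):ℝ)| *
                  |(d:ℝ)^(2*(κ-1)) * (T (N/d^2) - C/(κ:ℝ) * ((N/d^2 : ℕ):ℝ)^κ)| := abs_mul _ _
              _ ≤ 1 * ((d:ℝ)^(2*(κ-1)) *
                    (A₃ * (((N/d^2 : ℕ):ℝ)^(κ-1) * ((N/d^2 : ℕ):ℝ)^((3:ℝ)/5)))) := by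
                  refine mul_le_mul hμ ?_ (abs_nonneg _) (by norm_num)
                  rw [abs_mul, _root_.abs_of_nonneg (by positivity : (0:ℝ) ≤ (d:ℝ)^(2*(κ-1)))]
                  exact mul_le_mul_of_nonneg_left he1 (by positivity)
              _ ≤ 1 * ((d:ℝ)^(2*(κ-1)) *
                    (A₃ * (((N:ℝ)/((d:ℝ)^2))^(κ-1) * ((N:ℝ)/((d:ℝ)^2))^((3:ℝ)/5)))) := by
                  refine mul_le_mul_of_nonneg_left ?_ (by norm_num)
                  refine mul_le_mul_of_nonneg_left ?_ (by positivity)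
                  refine mul_le_mul_of_nonneg_left ?_ hA₃nn
                  exact mul_le_mul hp1 hp2 (Real.rpow_nonneg hflnn _) (by positivity)
              _ = (A₃ * ((N:ℝ)^(κ-1) * (N:ℝ)^((3:ℝ)/5))) * ((1:ℝ)/(d:ℝ)^((6:ℝ)/5)) := by
                  rw [one_mul]
                  rw [show (d:ℝ)^(2*(κ-1)) * (A₃ * (((N:ℝ)/((d:ℝ)^2))^(κ-1) *
                    ((N:ℝ)/((d:ℝ)^2))^((3:ℝ)/5))) = A₃ * ((d:ℝ)^(2*(κ-1)) *
                    (((N:ℝ)/((d:ℝ)^2))^(κ-1) * ((N:ℝ)/((d:ℝ)^2))^((3:ℝ)/5))) from by ring]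
                  rw [hcollapse]
                  ring
        _ = (A₃ * ((N:ℝ)^(κ-1) * (N:ℝ)^((3:ℝ)/5))) *
              (∑ d ∈ Finset.Icc 1 R, (1:ℝ)/(d:ℝ)^((6:ℝ)/5)) := by rw [← Finset.mul_sum]
        _ ≤ (A₃ * ((N:ℝ)^(κ-1) * (N:ℝ)^((3:ℝ)/5))) * K₆ := by
            exact mul_le_mul_of_nonneg_left (hK6 R) (by positivity)
        _ = A₃ * K₆ * ((N:ℝ)^(κ-1) * (N:ℝ)^((3:ℝ)/5)) := by ring
    -- bound E2
    have hE2 : |∑ d ∈ Finset.Icc 1 R, ((ArithmeticFunction.moebius d : ℤ):ℝ) *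
          ((d:ℝ)^(2*(κ-1)) * ((N/d^2 : ℕ):ℝ)^κ - (N:ℝ)^κ/(d:ℝ)^2)|
        ≤ (R:ℝ) * ((κ:ℝ) * (N:ℝ)^(κ-1)) := by
      calc |∑ d ∈ Finset.Icc 1 R, ((ArithmeticFunction.moebius d : ℤ):ℝ) *
              ((d:ℝ)^(2*(κ-1)) * ((N/d^2 : ℕ):ℝ)^κ - (N:ℝ)^κ/(d:ℝ)^2)|
          ≤ ∑ d ∈ Finset.Icc 1 R, |((ArithmeticFunction.moebius d : ℤ):ℝ) *
              ((d:ℝ)^(2*(κ-1)) * ((N/d^2 : ℕ):ℝ)^κ - (N:ℝ)^κ/(d:ℝ)^2)| :=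
            Finset.abs_sum_le_sum_abs _ _
        _ ≤ ∑ _d ∈ Finset.Icc 1 R, ((κ:ℝ) * (N:ℝ)^(κ-1)) := by
            refine Finset.sum_le_sum fun d hd => ?_
            obtain ⟨hd1, hdR⟩ := Finset.mem_Icc.mp hd
            have hdpos : (0:ℝ) < (d:ℝ) := by exact_mod_cast Nat.pos_of_ne_zero (by omega)
            have hdne : ((d:ℝ)) ≠ 0 := ne_of_gt hdpos
            have hd2pos : (0:ℝ) < (d:ℝ)^2 := by positivity
            have hfl : ((N/d^2 : ℕ):ℝ) ≤ (N:ℝ)/((d:ℝ)^2) := by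
              have h := Nat.cast_div_le (α := ℝ) (m := N) (n := d^2)
              rwa [Nat.cast_pow] at h
            have hflnn : (0:ℝ) ≤ ((N/d^2 : ℕ):ℝ) := Nat.cast_nonneg _
            have hq1 : (N:ℝ)/((d:ℝ)^2) ≤ ((N/d^2 : ℕ):ℝ) + 1 := by
              have h1 := Nat.div_add_mod N (d^2)
              have h2 := Nat.mod_lt N (y := d^2) (by positivity)
              rw [div_le_iff₀ hd2pos]
              have h3 : (N:ℝ) = (d:ℝ)^2 * ((N/d^2 : ℕ):ℝ) + ((N % d^2 : ℕ):ℝ) := by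
                exact_mod_cast congrArg (fun t : ℕ => (t:ℝ)) h1.symm
              have h4 : ((N % d^2 : ℕ):ℝ) < (d:ℝ)^2 := by exact_mod_cast h2
              nlinarith
            have hdq : (d:ℝ)^(2*(κ-1)) * ((N:ℝ)/((d:ℝ)^2))^κ = (N:ℝ)^κ/(d:ℝ)^2 := by
              have h9 : ((d:ℝ)^2)^κ = ((d:ℝ)^2)^(κ-1) * (d:ℝ)^2 := by
                rw [← pow_succ]; congr 1; omega
              rw [div_pow, pow_mul]
              field_simp
              rw [h9]; ring
            have hdq2 : (d:ℝ)^(2*(κ-1)) * ((N:ℝ)/((d:ℝ)^2))^(κ-1) = (N:ℝ)^(κ-1) := by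
              rw [div_pow, pow_mul]
              field_simp
            have h5 := Stmt13Aux.pow_sub_pow_le (b := ((N/d^2 : ℕ):ℝ))
              (a := (N:ℝ)/((d:ℝ)^2)) hflnn hfl κ
            have h6 : (N:ℝ)/((d:ℝ)^2) - ((N/d^2 : ℕ):ℝ) ≤ 1 := by linarith
            have hpownn : (0:ℝ) ≤ ((N:ℝ)/((d:ℝ)^2))^κ - ((N/d^2 : ℕ):ℝ)^κ :=
              sub_nonneg.mpr (pow_le_pow_left₀ hflnn hfl κ)
            have hμ : |((ArithmeticFunction.moebius d : ℤ):ℝ)| ≤ 1 := by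
              have h1 : |(ArithmeticFunction.moebius d : ℤ)| ≤ 1 :=
                ArithmeticFunction.abs_moebius_le_one
              exact_mod_cast h1
            calc |((ArithmeticFunction.moebius d : ℤ):ℝ) *
                  ((d:ℝ)^(2*(κ-1)) * ((N/d^2 : ℕ):ℝ)^κ - (N:ℝ)^κ/(d:ℝ)^2)|
                = |((ArithmeticFunction.moebius d : ℤ):ℝ)| *
                  |(d:ℝ)^(2*(κ-1)) * ((N/d^2 : ℕ):ℝ)^κ - (N:ℝ)^κ/(d:ℝ)^2| := abs_mul _ _
              _ ≤ 1 * |(d:ℝ)^(2*(κ-1)) * ((N/d^2 : ℕ):ℝ)^κ - (N:ℝ)^κ/(d:ℝ)^2| :=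
                  mul_le_mul_of_nonneg_right hμ (abs_nonneg _)
              _ = |(d:ℝ)^(2*(κ-1)) * ((N/d^2 : ℕ):ℝ)^κ - (N:ℝ)^κ/(d:ℝ)^2| := one_mul _
              _ = (d:ℝ)^(2*(κ-1)) * (((N:ℝ)/((d:ℝ)^2))^κ - ((N/d^2 : ℕ):ℝ)^κ) := by
                  rw [← hdq, abs_sub_comm, ← mul_sub, abs_mul,
                    _root_.abs_of_nonneg (by positivity : (0:ℝ) ≤ (d:ℝ)^(2*(κ-1))),
                    _root_.abs_of_nonneg hpownn]
              _ ≤ (d:ℝ)^(2*(κ-1)) * ((κ:ℝ) * ((N:ℝ)/((d:ℝ)^2))^(κ-1)) := by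
                  refine mul_le_mul_of_nonneg_left ?_ (by positivity)
                  have h7 : (κ:ℝ) * ((N:ℝ)/((d:ℝ)^2))^(κ-1) *
                      ((N:ℝ)/((d:ℝ)^2) - ((N/d^2 : ℕ):ℝ))
                      ≤ (κ:ℝ) * ((N:ℝ)/((d:ℝ)^2))^(κ-1) * 1 := by
                    refine mul_le_mul_of_nonneg_left h6 (by positivity)
                  calc ((N:ℝ)/((d:ℝ)^2))^κ - ((N/d^2 : ℕ):ℝ)^κ
                      ≤ (κ:ℝ) * ((N:ℝ)/((d:ℝ)^2))^(κ-1) *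
                        ((N:ℝ)/((d:ℝ)^2) - ((N/d^2 : ℕ):ℝ)) := h5
                    _ ≤ (κ:ℝ) * ((N:ℝ)/((d:ℝ)^2))^(κ-1) := by linarith
              _ = (κ:ℝ) * (N:ℝ)^(κ-1) := by
                  rw [show (d:ℝ)^(2*(κ-1)) * ((κ:ℝ) * ((N:ℝ)/((d:ℝ)^2))^(κ-1))
                    = (κ:ℝ) * ((d:ℝ)^(2*(κ-1)) * ((N:ℝ)/((d:ℝ)^2))^(κ-1)) from by ring, hdq2]
        _ = (R:ℝ) * ((κ:ℝ) * (N:ℝ)^(κ-1)) := by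
            rw [Finset.sum_const, Nat.card_Icc, nsmul_eq_mul]
            norm_num
    -- sqrt facts
    have hsq35 : Real.sqrt (N:ℝ) ≤ (N:ℝ)^((3:ℝ)/5) := by
      rw [Real.sqrt_eq_rpow]
      exact Real.rpow_le_rpow_of_exponent_le hN1R (by norm_num)
    have hRle : (R:ℝ) ≤ (N:ℝ)^((3:ℝ)/5) := by
      have h4 : ((R:ℝ))^2 ≤ (N:ℝ) := by
        have := Nat.sqrt_le' N
        rw [hRdef]
        exact_mod_cast this
      have h5 : (R:ℝ) ≤ Real.sqrt (N:ℝ) := by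
        rw [← Real.sqrt_sq (by positivity : (0:ℝ) ≤ (R:ℝ))]
        exact Real.sqrt_le_sqrt h4
      exact h5.trans hsq35
    -- bound E3
    have hE3 : |(((∑ d ∈ Finset.Icc 1 R, Stmt13Aux.fmu d) - L) * (N:ℝ)^κ)|
        ≤ 2 * ((N:ℝ)^(κ-1) * (N:ℝ)^((3:ℝ)/5)) := by
      have hmp := Stmt13Aux.moebius_partial R
      rw [← hLdef] at hmp
      have h1 : |(∑ d ∈ Finset.Icc 1 R, Stmt13Aux.fmu d) - L| ≤ 2/((R:ℝ)+1) := by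
        rw [abs_sub_comm]
        have h3 : ((R:ℝ)+1) ≤ ((R:ℝ)+1)^2 := by nlinarith [Nat.cast_nonneg (α := ℝ) R]
        have h2 : 1/((R:ℝ)+1)^2 ≤ 1/((R:ℝ)+1) := one_div_le_one_div_of_le (by positivity) h3
        have h4 : 1/((R:ℝ)+1) + 1/((R:ℝ)+1) = 2/((R:ℝ)+1) := by ring
        calc |L - ∑ d ∈ Finset.Icc 1 R, Stmt13Aux.fmu d|
            ≤ 1/((R:ℝ)+1)^2 + 1/((R:ℝ)+1) := hmp
          _ ≤ 2/((R:ℝ)+1) := by linarith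
      have hsq : Real.sqrt (N:ℝ) ≤ (R:ℝ) + 1 := by
        have h4 : (N:ℝ) ≤ ((R:ℝ)+1)^2 := by
          have h5 := Nat.lt_succ_sqrt N
          rw [hRdef]
          have h6 : (N:ℝ) < ((Nat.sqrt N : ℝ)+1) * ((Nat.sqrt N : ℝ)+1) := by
            exact_mod_cast h5
          nlinarith
        calc Real.sqrt (N:ℝ) ≤ Real.sqrt (((R:ℝ)+1)^2) := Real.sqrt_le_sqrt h4
          _ = (R:ℝ)+1 := Real.sqrt_sq (by positivity)
      have hsqpos : 0 < Real.sqrt (N:ℝ) := Real.sqrt_pos.mpr hNpos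
      have h5 : 2/((R:ℝ)+1) ≤ 2/Real.sqrt (N:ℝ) := by
        have h6 : 1/((R:ℝ)+1) ≤ 1/Real.sqrt (N:ℝ) := one_div_le_one_div_of_le hsqpos hsq
        calc 2/((R:ℝ)+1) = 2 * (1/((R:ℝ)+1)) := by ring
          _ ≤ 2 * (1/Real.sqrt (N:ℝ)) := by linarith
          _ = 2/Real.sqrt (N:ℝ) := by ring
      have hNκ : (N:ℝ)^κ = (N:ℝ)^(κ-1) * (N:ℝ) := by rw [← pow_succ]; congr 1; omega
      have hds : (N:ℝ)/Real.sqrt (N:ℝ) = Real.sqrt (N:ℝ) := Real.div_sqrt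
      calc |(((∑ d ∈ Finset.Icc 1 R, Stmt13Aux.fmu d) - L) * (N:ℝ)^κ)|
          = |(∑ d ∈ Finset.Icc 1 R, Stmt13Aux.fmu d) - L| * (N:ℝ)^κ := by
            rw [abs_mul, _root_.abs_of_nonneg (by positivity : (0:ℝ) ≤ (N:ℝ)^κ)]
        _ ≤ (2/Real.sqrt (N:ℝ)) * (N:ℝ)^κ :=
            mul_le_mul_of_nonneg_right (h1.trans h5) (by positivity)
        _ = 2 * ((N:ℝ)^(κ-1) * ((N:ℝ)/Real.sqrt (N:ℝ))) := by rw [hNκ]; ring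
        _ = 2 * ((N:ℝ)^(κ-1) * Real.sqrt (N:ℝ)) := by rw [hds]
        _ ≤ 2 * ((N:ℝ)^(κ-1) * (N:ℝ)^((3:ℝ)/5)) := by
            refine mul_le_mul_of_nonneg_left
              (mul_le_mul_of_nonneg_left hsq35 (by positivity)) (by norm_num)
    -- combine
    rw [hid]
    have hCκ : (0:ℝ) ≤ C/(κ:ℝ) := by positivity
    have hb2 : |C/(κ:ℝ) * (∑ d ∈ Finset.Icc 1 R, ((ArithmeticFunction.moebius d : ℤ):ℝ) *
          ((d:ℝ)^(2*(κ-1)) * ((N/d^2 : ℕ):ℝ)^κ - (N:ℝ)^κ/(d:ℝ)^2))|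
        ≤ C * ((N:ℝ)^(κ-1) * (N:ℝ)^((3:ℝ)/5)) := by
      rw [abs_mul, _root_.abs_of_nonneg hCκ]
      calc C/(κ:ℝ) * |∑ d ∈ Finset.Icc 1 R, ((ArithmeticFunction.moebius d : ℤ):ℝ) *
              ((d:ℝ)^(2*(κ-1)) * ((N/d^2 : ℕ):ℝ)^κ - (N:ℝ)^κ/(d:ℝ)^2)|
          ≤ C/(κ:ℝ) * ((R:ℝ) * ((κ:ℝ) * (N:ℝ)^(κ-1))) := mul_le_mul_of_nonneg_left hE2 hCκ
        _ ≤ C/(κ:ℝ) * ((N:ℝ)^((3:ℝ)/5) * ((κ:ℝ) * (N:ℝ)^(κ-1))) := by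
            refine mul_le_mul_of_nonneg_left (mul_le_mul_of_nonneg_right hRle ?_) hCκ
            positivity
        _ = C * ((N:ℝ)^(κ-1) * (N:ℝ)^((3:ℝ)/5)) := by
            field_simp
    have hb3 : |C/(κ:ℝ) * ((((∑ d ∈ Finset.Icc 1 R, Stmt13Aux.fmu d) - L) * (N:ℝ)^κ))|
        ≤ 2*C/(κ:ℝ) * ((N:ℝ)^(κ-1) * (N:ℝ)^((3:ℝ)/5)) := by
      rw [abs_mul, _root_.abs_of_nonneg hCκ]
      calc C/(κ:ℝ) * |(((∑ d ∈ Finset.Icc 1 R, Stmt13Aux.fmu d) - L) * (N:ℝ)^κ)|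
          ≤ C/(κ:ℝ) * (2 * ((N:ℝ)^(κ-1) * (N:ℝ)^((3:ℝ)/5))) :=
            mul_le_mul_of_nonneg_left hE3 hCκ
        _ = 2*C/(κ:ℝ) * ((N:ℝ)^(κ-1) * (N:ℝ)^((3:ℝ)/5)) := by ring
    calc |(∑ d ∈ Finset.Icc 1 R, ((ArithmeticFunction.moebius d : ℤ):ℝ) *
            ((d:ℝ)^(2*(κ-1)) * (T (N/d^2) - C/(κ:ℝ) * ((N/d^2 : ℕ):ℝ)^κ)))
          + C/(κ:ℝ) * (∑ d ∈ Finset.Icc 1 R, ((ArithmeticFunction.moebius d : ℤ):ℝ) *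
            ((d:ℝ)^(2*(κ-1)) * ((N/d^2 : ℕ):ℝ)^κ - (N:ℝ)^κ/(d:ℝ)^2))
          + C/(κ:ℝ) * ((((∑ d ∈ Finset.Icc 1 R, Stmt13Aux.fmu d) - L) * (N:ℝ)^κ))|
        ≤ |∑ d ∈ Finset.Icc 1 R, ((ArithmeticFunction.moebius d : ℤ):ℝ) *
            ((d:ℝ)^(2*(κ-1)) * (T (N/d^2) - C/(κ:ℝ) * ((N/d^2 : ℕ):ℝ)^κ))|
          + |C/(κ:ℝ) * (∑ d ∈ Finset.Icc 1 R, ((ArithmeticFunction.moebius d : ℤ):ℝ) *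
            ((d:ℝ)^(2*(κ-1)) * ((N/d^2 : ℕ):ℝ)^κ - (N:ℝ)^κ/(d:ℝ)^2))|
          + |C/(κ:ℝ) * ((((∑ d ∈ Finset.Icc 1 R, Stmt13Aux.fmu d) - L) * (N:ℝ)^κ))| :=
          abs_add_three _ _ _
      _ ≤ A₃ * K₆ * ((N:ℝ)^(κ-1) * (N:ℝ)^((3:ℝ)/5))
          + C * ((N:ℝ)^(κ-1) * (N:ℝ)^((3:ℝ)/5))
          + 2*C/(κ:ℝ) * ((N:ℝ)^(κ-1) * (N:ℝ)^((3:ℝ)/5)) := by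
          exact add_le_add (add_le_add hE1 hb2) hb3
      _ = (A₃ * K₆ + C + 2*C/(κ:ℝ)) * ((N:ℝ)^(κ-1) * (N:ℝ)^((3:ℝ)/5)) := by ring
  -- conclusion
  refine ⟨D, hDpos, ?_⟩
  rw [Asymptotics.isBigO_iff]
  refine ⟨(A₃ * K₆ + C + 2*C/(κ:ℝ)) + D * κ, ?_⟩
  filter_upwards [eventually_ge_atTop (1:ℝ)] with x hx
  have hx0 : (0:ℝ) < x := lt_of_lt_of_le one_pos hx
  set N : ℕ := ⌊x⌋₊ with hNdef
  have hN1 : 1 ≤ N := Nat.le_floor (by exact_mod_cast hx)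
  have hNR : (0:ℝ) ≤ (N:ℝ) := Nat.cast_nonneg _
  have hNx : ((N:ℝ)) ≤ x := Nat.floor_le (le_of_lt hx0)
  have hxN : x ≤ (N:ℝ) + 1 := le_of_lt (Nat.lt_floor_add_one x)
  have hsum : (∑ n ∈ Finset.Icc 1 N, b n) = Bf N := rfl
  rw [Real.norm_eq_abs, Real.norm_eq_abs, Real.rpow_natCast, hsum,
    _root_.abs_of_nonneg (Real.rpow_nonneg hx0.le _)]
  have hb1 := hmain N hN1
  have hxknn : 0 ≤ x^κ - (N:ℝ)^κ := sub_nonneg.mpr (pow_le_pow_left₀ hNR hNx κ)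
  have hxk : x^κ - (N:ℝ)^κ ≤ (κ:ℝ) * x^(κ-1) := by
    have h1 := Stmt13Aux.pow_sub_pow_le (b := (N:ℝ)) (a := x) hNR hNx κ
    have h2 : x - (N:ℝ) ≤ 1 := by linarith
    have h3 : (κ:ℝ) * x^(κ-1) * (x - (N:ℝ)) ≤ (κ:ℝ) * x^(κ-1) * 1 :=
      mul_le_mul_of_nonneg_left h2 (by positivity)
    calc x^κ - (N:ℝ)^κ ≤ (κ:ℝ) * x^(κ-1) * (x - (N:ℝ)) := h1
      _ ≤ (κ:ℝ) * x^(κ-1) := by linarith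
  have htri : |Bf N - D * x^κ| ≤ |Bf N - D*(N:ℝ)^κ| + D*(x^κ - (N:ℝ)^κ) := by
    have h1 : Bf N - D*x^κ = (Bf N - D*(N:ℝ)^κ) - D*(x^κ - (N:ℝ)^κ) := by ring
    rw [h1]
    calc |(Bf N - D*(N:ℝ)^κ) - D*(x^κ - (N:ℝ)^κ)|
        ≤ |Bf N - D*(N:ℝ)^κ| + |D*(x^κ - (N:ℝ)^κ)| := abs_sub _ _
      _ = |Bf N - D*(N:ℝ)^κ| + D*(x^κ - (N:ℝ)^κ) := by
          rw [_root_.abs_of_nonneg (mul_nonneg hDpos.le hxknn)]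
  have hm1 : (N:ℝ)^(κ-1) ≤ x^(κ-1) := pow_le_pow_left₀ hNR hNx _
  have hm2 : (N:ℝ)^((3:ℝ)/5) ≤ x^((3:ℝ)/5) := Real.rpow_le_rpow hNR hNx (by norm_num)
  have hx35 : (1:ℝ) ≤ x^((3:ℝ)/5) := by
    have := Real.rpow_le_rpow_of_exponent_le hx (by norm_num : (0:ℝ) ≤ 3/5)
    rwa [Real.rpow_zero] at this
  have hconst : (0:ℝ) ≤ A₃ * K₆ + C + 2*C/(κ:ℝ) := by
    have h1 : (0:ℝ) ≤ A₃ * K₆ := mul_nonneg hA₃nn hK₆nn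
    have h2 : (0:ℝ) ≤ 2*C/(κ:ℝ) := by positivity
    exact add_nonneg (add_nonneg h1 hC.le) h2
  have hfinal : |Bf N - D * x^κ|
      ≤ ((A₃ * K₆ + C + 2*C/(κ:ℝ)) + D * κ) * (x^(κ-1) * x^((3:ℝ)/5)) := by
    have hstep1 : (N:ℝ)^(κ-1) * (N:ℝ)^((3:ℝ)/5) ≤ x^(κ-1) * x^((3:ℝ)/5) :=
      mul_le_mul hm1 hm2 (Real.rpow_nonneg hNR _) (by positivity)
    have hstep2 : D * ((κ:ℝ) * x^(κ-1)) ≤ D * κ * (x^(κ-1) * x^((3:ℝ)/5)) := by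
      have h1 : D * ((κ:ℝ) * x^(κ-1)) = D * κ * x^(κ-1) := by ring
      rw [h1]
      exact le_mul_of_one_le_right (by positivity) hx35 |>.trans_eq (by ring)
    calc |Bf N - D * x^κ|
        ≤ |Bf N - D*(N:ℝ)^κ| + D*(x^κ - (N:ℝ)^κ) := htri
      _ ≤ (A₃ * K₆ + C + 2*C/(κ:ℝ)) * ((N:ℝ)^(κ-1) * (N:ℝ)^((3:ℝ)/5))
          + D * ((κ:ℝ) * x^(κ-1)) :=
          add_le_add hb1 (mul_le_mul_of_nonneg_left hxk hDpos.le)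
      _ ≤ (A₃ * K₆ + C + 2*C/(κ:ℝ)) * (x^(κ-1) * x^((3:ℝ)/5))
          + D * κ * (x^(κ-1) * x^((3:ℝ)/5)) :=
          add_le_add (mul_le_mul_of_nonneg_left hstep1 hconst) hstep2
      _ = ((A₃ * K₆ + C + 2*C/(κ:ℝ)) + D * κ) * (x^(κ-1) * x^((3:ℝ)/5)) := by ring
  have hexp : x^(κ-1) * x^((3:ℝ)/5) = x^((κ:ℝ) - 2/5) := by
    rw [← Real.rpow_natCast x (κ-1), ← Real.rpow_add hx0]
    congr 1
    push_cast [Nat.cast_sub hκ1]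
    ring
  calc |Bf N - D * x^κ|
      ≤ ((A₃ * K₆ + C + 2*C/(κ:ℝ)) + D * κ) * (x^(κ-1) * x^((3:ℝ)/5)) := hfinal
    _ = ((A₃ * K₆ + C + 2*C/(κ:ℝ)) + D * κ) * x^((κ:ℝ) - 2/5) := by rw [hexp]
end
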